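/- Let G be a finite simple graph with an injective, nonnegative edge weight function w, and let M be the output of the iterated local max algorithm (run until no edges remain). Then M is a 1/2-approximation of the maximum weight matching: for every matching M' of G, Σ_{e ∈ M'} w(e) ≤ 2 · Σ_{f ∈ M} w(f). -/
import Mathlib


/-- Two edges of a graph share an endpoint. -/
def shareEndpoint {V : Type*} (e f : Sym2 V) : Prop := ∃ v, v ∈ e ∧ v ∈ f

/-- An edge `e` of the subgraph with edge set `E` is locally maximal in it:
`e ∈ E` and `w e > w f` for every other edge `f ∈ E` sharing an endpoint with `e`. -/
def locMaxIn {V : Type*} (w : Sym2 V → ℝ) (E : Set (Sym2 V)) (e : Sym2 V) : Prop :=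
  e ∈ E ∧ ∀ f ∈ E, f ≠ e → shareEndpoint e f → w f < w e

/-- One round of the local max algorithm: remove every edge sharing an endpoint with
some locally maximal edge (including the locally maximal edges themselves). -/
def stepSet {V : Type*} (w : Sym2 V → ℝ) (E : Set (Sym2 V)) : Set (Sym2 V) :=
  {f ∈ E | ¬ ∃ e, locMaxIn w E e ∧ shareEndpoint e f}

/-- The edge set of the graph `G_i` after `i` rounds of the local max algorithm. -/
def Eseq {V : Type*} (G : SimpleGraph V) (w : Sym2 V → ℝ) : ℕ → Set (Sym2 V)
  | 0 => G.edgeSet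
  | n + 1 => stepSet w (Eseq G w n)

/-- The set `M_i` of edges matched in round `i`: the locally maximal edges of `G_i`. -/
def Mi {V : Type*} (G : SimpleGraph V) (w : Sym2 V → ℝ) (i : ℕ) : Set (Sym2 V) :=
  {e | locMaxIn w (Eseq G w i) e}

lemma shareEndpoint_self {V : Type*} (e : Sym2 V) : shareEndpoint e e := by
  induction e using Sym2.ind with
  | _ a b => exact ⟨a, Sym2.mem_mk_left a b, Sym2.mem_mk_left a b⟩

lemma card_le_two_of {V : Type*} (s : Finset (Sym2 V)) (f : Sym2 V) (hd : ¬ f.IsDiag)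
    (hm : ∀ e ∈ s, ∀ e' ∈ s, e ≠ e' → ¬ shareEndpoint e e')
    (hs : ∀ e ∈ s, shareEndpoint f e) : s.card ≤ 2 := by
  classical
  induction f using Sym2.ind with
  | _ u v =>
  have hmem : ∀ e ∈ s, u ∈ e ∨ v ∈ e := by
    intro e he
    obtain ⟨x, hx, hxe⟩ := hs e he
    rcases Sym2.mem_iff.1 hx with rfl | rfl
    · exact Or.inl hxe
    · exact Or.inr hxe
  have : s.card ≤ ({u, v} : Finset V).card := by
    apply Finset.card_le_card_of_injOn (fun e => if u ∈ e then u else v)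
    · intro e he
      by_cases h : u ∈ e <;> simp [h]
    · intro e1 h1 e2 h2 heq
      simp only [Finset.mem_coe] at h1 h2
      by_contra hne
      by_cases h1u : u ∈ e1 <;> by_cases h2u : u ∈ e2
      · exact hm e1 h1 e2 h2 hne ⟨u, h1u, h2u⟩
      · simp only [h1u, h2u, if_true, if_false] at heq
        exact hd (by simp [Sym2.isDiag_iff_proj_eq, heq])
      · simp only [h1u, h2u, if_true, if_false] at heq
        exact hd (by simp [Sym2.isDiag_iff_proj_eq, heq.symm])
      · have hv1 : v ∈ e1 := (hmem e1 h1).resolve_left h1u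
        have hv2 : v ∈ e2 := (hmem e2 h2).resolve_left h2u
        exact hm e1 h1 e2 h2 hne ⟨v, hv1, hv2⟩
  exact this.trans ((Finset.card_insert_le u {v}).trans (by simp))


/-- Let `G` be a finite simple graph with an injective, nonnegative
edge weight function `w`, and let `M = ∪_i M_i` be the output of the iterated local
max algorithm (run until no edges remain). Then `M` is a `1/2`-approximation of the
maximum weight matching: for every matching `M'` of `G`,
`Σ_{e ∈ M'} w e ≤ 2 · Σ_{f ∈ M} w f`. -/
theorem stmt13 {V : Type*} [Fintype V] (G : SimpleGraph V) (w : Sym2 V → ℝ)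
    (hinj : Set.InjOn w G.edgeSet) (hw : ∀ e ∈ G.edgeSet, 0 ≤ w e) :
    ∀ M' : Finset (Sym2 V), ↑M' ⊆ G.edgeSet →
      (∀ e ∈ M', ∀ f ∈ M', e ≠ f → ¬ shareEndpoint e f) →
      ∑ e ∈ M', w e ≤ 2 * ∑ᶠ f ∈ ⋃ i, Mi G w i, w f := by
  classical
  intro M' hM'sub hM'match
  -- basic facts about Eseq
  have hEsub : ∀ i, Eseq G w i ⊆ G.edgeSet := by
    intro i
    induction i with
    | zero => exact le_refl _
    | succ n ih => exact fun f hf => ih hf.1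
  have hfin : ∀ i, (Eseq G w i).Finite :=
    fun i => (Set.toFinite G.edgeSet).subset (hEsub i)
  -- existence of locally maximal edges
  have hex : ∀ i, (Eseq G w i).Nonempty → ∃ e, locMaxIn w (Eseq G w i) e := by
    intro i hne
    obtain ⟨e, he, hmax⟩ := Set.exists_max_image (Eseq G w i) w (hfin i) hne
    refine ⟨e, he, fun f hf hfe _ => ?_⟩
    exact lt_of_le_of_ne (hmax f hf) (fun h => hfe (hinj (hEsub i hf) (hEsub i he) h))
  -- strict decrease
  have hdec : ∀ i, (Eseq G w i).Nonempty →
      (Eseq G w (i+1)).ncard < (Eseq G w i).ncard := by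
    intro i hne
    obtain ⟨e, he⟩ := hex i hne
    apply Set.ncard_lt_ncard _ (hfin i)
    constructor
    · exact fun f hf => hf.1
    · intro hsub
      exact (hsub he.1).2 ⟨e, he, shareEndpoint_self e⟩
  -- termination
  have hterm : ∀ e ∈ G.edgeSet, ∃ i, e ∉ Eseq G w i := by
    intro e he
    by_contra h
    push_neg at h
    have hmono : ∀ i, (Eseq G w i).ncard + i ≤ (Eseq G w 0).ncard := by
      intro i
      induction i with
      | zero => simp
      | succ n ih =>
        have := hdec n ⟨e, h n⟩
        omega
    have := hmono ((Eseq G w 0).ncard + 1)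
    omega
  -- key charging lemma
  have hkey : ∀ e ∈ G.edgeSet, ∃ f, (f ∈ ⋃ i, Mi G w i) ∧ shareEndpoint f e ∧ w e ≤ w f := by
    intro e he
    have hP : ∃ i, e ∉ Eseq G w i := hterm e he
    have hj : e ∉ Eseq G w (Nat.find hP) := Nat.find_spec hP
    have hjpos : Nat.find hP ≠ 0 := by
      intro h
      rw [h] at hj
      exact hj he
    obtain ⟨k, hk'⟩ := Nat.exists_eq_succ_of_ne_zero hjpos
    rw [hk'] at hj
    have hk : e ∈ Eseq G w k := by
      by_contra hc
      exact Nat.find_min hP (by omega) hc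
    have hstep : ∃ f, locMaxIn w (Eseq G w k) f ∧ shareEndpoint f e := by
      by_contra hc
      exact hj ⟨hk, hc⟩
    obtain ⟨f, hfloc, hshare⟩ := hstep
    refine ⟨f, Set.mem_iUnion.2 ⟨k, hfloc⟩, hshare, ?_⟩
    by_cases hfe : f = e
    · exact le_of_eq (by rw [hfe])
    · exact le_of_lt (hfloc.2 e hk (fun h => hfe h.symm) hshare)
  -- finiteness of M
  have hMsub : (⋃ i, Mi G w i) ⊆ G.edgeSet := by
    intro f hf
    obtain ⟨i, hi⟩ := Set.mem_iUnion.1 hf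
    exact hEsub i hi.1
  have hMfin : (⋃ i, Mi G w i).Finite := (Set.toFinite G.edgeSet).subset hMsub
  set Mf := hMfin.toFinset with hMf
  -- the charging map
  set φ : Sym2 V → Sym2 V := fun e =>
    if h : e ∈ G.edgeSet then (hkey e h).choose else e with hφ
  have hφspec : ∀ e ∈ M', (φ e ∈ ⋃ i, Mi G w i) ∧ shareEndpoint (φ e) e ∧ w e ≤ w (φ e) := by
    intro e he
    have h : e ∈ G.edgeSet := hM'sub he
    simp only [hφ, dif_pos h]
    exact (hkey e h).choose_spec
  have himg : M'.image φ ⊆ Mf := by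
    intro f hf
    obtain ⟨e, he, rfl⟩ := Finset.mem_image.1 hf
    exact hMfin.mem_toFinset.2 (hφspec e he).1
  have hrw : ∑ᶠ f ∈ ⋃ i, Mi G w i, w f = ∑ f ∈ Mf, w f := by
    rw [← Set.Finite.coe_toFinset hMfin, finsum_mem_coe_finset]
  rw [hrw]
  calc ∑ e ∈ M', w e ≤ ∑ e ∈ M', w (φ e) :=
        Finset.sum_le_sum (fun e he => (hφspec e he).2.2)
    _ = ∑ f ∈ M'.image φ, (M'.filter (fun e => φ e = f)).card • w f := Finset.sum_comp w φ
    _ ≤ ∑ f ∈ M'.image φ, 2 * w f := by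
        apply Finset.sum_le_sum
        intro f hf
        have hfM : f ∈ ⋃ i, Mi G w i := hMfin.mem_toFinset.1 (himg hf)
        have hfE : f ∈ G.edgeSet := hMsub hfM
        have hwf : 0 ≤ w f := hw f hfE
        have hd : ¬ f.IsDiag := G.not_isDiag_of_mem_edgeSet hfE
        have hcard : (M'.filter (fun e => φ e = f)).card ≤ 2 := by
          apply card_le_two_of _ f hd
          · intro e he e' he' hne
            exact hM'match e (Finset.mem_filter.1 he).1 e' (Finset.mem_filter.1 he').1 hne
          · intro e he
            obtain ⟨heM, heq⟩ := Finset.mem_filter.1 he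
            have := (hφspec e heM).2.1
            rwa [heq] at this
        rw [nsmul_eq_mul]
        exact mul_le_mul_of_nonneg_right (by exact_mod_cast hcard) hwf
    _ = 2 * ∑ f ∈ M'.image φ, w f := (Finset.mul_sum _ _ _).symm
    _ ≤ 2 * ∑ f ∈ Mf, w f := by
        apply mul_le_mul_of_nonneg_left _ (by norm_num)
        apply Finset.sum_le_sum_of_subset_of_nonneg himg
        intro f hf _
        exact hw f (hMsub (hMfin.mem_toFinset.1 hf))
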